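/- arXiv:1607.06214 — 3 statements merged into one kernel-verified Lean document; each statement's English description precedes it below -/
import Mathlib

section
/- Let q(t) = t² − B with B ∈ ℝ, and let Z = {t ∈ ℝ : |q(t)| < δ} for δ > 0. Then the Lebesgue measure of Z satisfies μ(Z) ≤ 4·min(√δ, δ/√B) (where the second term is interpreted as +∞ if B ≤ 0). -/
open MeasureTheory

/-- μ{t : |t² − B| < δ} ≤ 4·min(√δ, δ/√B), the second term read as +∞ when B ≤ 0. -/
theorem stmt_0 (B δ : ℝ) (hδ : 0 < δ) :
    volume {t : ℝ | |t ^ 2 - B| < δ} ≤ ENNReal.ofReal (4 * Real.sqrt δ) ∧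
      (0 < B → volume {t : ℝ | |t ^ 2 - B| < δ} ≤ ENNReal.ofReal (4 * (δ / Real.sqrt B))) := by
  set s := Real.sqrt (B + δ) with hs
  set r := Real.sqrt (max (B - δ) 0) with hr
  have hs0 : 0 ≤ s := Real.sqrt_nonneg _
  have hr0 : 0 ≤ r := Real.sqrt_nonneg _
  have hr2 : r ^ 2 = max (B - δ) 0 := Real.sq_sqrt (le_max_right _ _)
  have hrs : r ≤ s := by
    rcases le_or_gt (B - δ) 0 with h | h
    · have : r = 0 := by rw [hr, max_eq_right h, Real.sqrt_zero]
      linarith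
    · rw [hr, max_eq_left h.le]
      exact Real.sqrt_le_sqrt (by linarith)
  -- subset of two intervals
  have hsub : {t : ℝ | |t ^ 2 - B| < δ} ⊆ Set.Ioc (-s) (-r) ∪ Set.Ico r s := by
    intro t ht
    simp only [Set.mem_setOf_eq, abs_lt] at ht
    have h1 : |t| < s := by
      rw [hs]
      rw [show |t| = Real.sqrt (t ^ 2) from (Real.sqrt_sq_eq_abs t).symm]
      exact Real.sqrt_lt_sqrt (sq_nonneg t) (by linarith [ht.2])
    have h2 : r ≤ |t| := by
      rw [hr, show |t| = Real.sqrt (t ^ 2) from (Real.sqrt_sq_eq_abs t).symm]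
      exact Real.sqrt_le_sqrt (max_le (by linarith [ht.1]) (sq_nonneg t))
    rcases le_or_gt 0 t with h | h
    · right
      rw [abs_of_nonneg h] at h1 h2
      exact ⟨h2, h1⟩
    · left
      rw [abs_of_neg h] at h1 h2
      constructor <;> linarith
  have hmeas : volume {t : ℝ | |t ^ 2 - B| < δ} ≤ ENNReal.ofReal (2 * (s - r)) := by
    calc volume {t : ℝ | |t ^ 2 - B| < δ}
        ≤ volume (Set.Ioc (-s) (-r) ∪ Set.Ico r s) := measure_mono hsub
      _ ≤ volume (Set.Ioc (-s) (-r)) + volume (Set.Ico r s) := measure_union_le _ _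
      _ = ENNReal.ofReal ((-r) - (-s)) + ENNReal.ofReal (s - r) := by
          rw [Real.volume_Ioc, Real.volume_Ico]
      _ = ENNReal.ofReal (2 * (s - r)) := by
          rw [show (-r) - (-s) = s - r by ring, ← ENNReal.ofReal_add (by linarith) (by linarith)]
          ring_nf
  constructor
  · -- first bound
    refine hmeas.trans (ENNReal.ofReal_le_ofReal ?_)
    have hd2 : (Real.sqrt δ) ^ 2 = δ := Real.sq_sqrt hδ.le
    have hd0 : 0 < Real.sqrt δ := Real.sqrt_pos.mpr hδ
    have key : s ≤ r + 2 * Real.sqrt δ := by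
      have h1 : B + δ ≤ (r + 2 * Real.sqrt δ) ^ 2 := by
        have : B - δ ≤ r ^ 2 := by rw [hr2]; exact le_max_left _ _
        nlinarith [mul_nonneg hr0 hd0.le]
      calc s ≤ Real.sqrt ((r + 2 * Real.sqrt δ) ^ 2) := Real.sqrt_le_sqrt h1
        _ = r + 2 * Real.sqrt δ := Real.sqrt_sq (by positivity)
    linarith
  · -- second bound
    intro hB
    refine hmeas.trans (ENNReal.ofReal_le_ofReal ?_)
    set b := Real.sqrt B with hb
    have hb0 : 0 < b := Real.sqrt_pos.mpr hB
    have hb2 : b ^ 2 = B := Real.sq_sqrt hB.le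
    have hs2 : s ^ 2 ≤ B + δ := by rw [hs, Real.sq_sqrt (by linarith)]
    have key : b * (s - r) ≤ 2 * δ := by
      rcases le_or_gt δ B with h | h
      · have hr2' : r ^ 2 = B - δ := by rw [hr2, max_eq_left (by linarith)]
        have hbs : b ≤ s := by
          rw [hb, hs]; exact Real.sqrt_le_sqrt (by linarith)
        nlinarith [mul_le_mul_of_nonneg_right hbs (sub_nonneg.mpr hrs),
          mul_le_mul_of_nonneg_left hrs hr0]
      · have hr' : r = 0 := by rw [hr, max_eq_right (by linarith), Real.sqrt_zero]
        rw [hr', sub_zero]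
        nlinarith [mul_nonneg hb0.le hs0, mul_le_mul_of_nonneg_left hs2 hB.le,
          sq_nonneg (b * s - 2 * δ), mul_pos hδ hδ]
    have h1 : s - r ≤ 2 * δ / b := (le_div_iff₀ hb0).mpr (by linarith)
    have h2 : 2 * δ / b = 2 * (δ / b) := by ring
    linarith
end

section
/- Let ν, Θ be unit vectors in ℝⁿ with Θ·ν = cos α, α ∈ (0, π), and let ψ ∈ S(ν^⊥) (Schwartz on the hyperplane ν^⊥). Define Ψ(σν + ξ) = ψ(ξ) for σ ∈ ℝ, ξ ∈ ν^⊥ (constant in direction ν). Then the inverse Fourier transform of Ψ along Θ satisfies (F_Θ^{−1}Ψ)(tΘ + ξ_{Θ^⊥}) = (sin α)^{−1} e^{iℓt cot α} (F_{ν_⊥}^{−1}ψ)((t/sin α) ν_⊥ + ξ_{⊥⊥}), where ν_⊥ is the unit vector in the (Θ,ν)-plane perpendicular to ν (positively oriented), ℓ = ξ_{Θ^⊥}·Θ_⊥, and ξ_{⊥⊥} is the component of tΘ + ξ_{Θ^⊥} perpendicular to the (Θ,ν)-plane. -/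
open MeasureTheory
open scoped RealInnerProductSpace

/-- Formula for the inverse Fourier transform along Θ of a function Ψ(σν + ξ) = ψ(ξ)
that is constant in the direction ν, when Θ is not parallel to ν. -/
theorem stmt_14 (n : ℕ) (ν Θ νp Θp : EuclideanSpace ℝ (Fin n))
    (hν : ‖ν‖ = 1) (hΘ : ‖Θ‖ = 1) (hνp : ‖νp‖ = 1) (hΘp : ‖Θp‖ = 1)
    (α : ℝ) (hα : α ∈ Set.Ioo 0 Real.pi) (hcos : ⟪Θ, ν⟫ = Real.cos α)
    (hνpν : ⟪νp, ν⟫ = 0) (hΘpΘ : ⟪Θp, Θ⟫ = 0)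
    (hΘdec : Θ = Real.cos α • ν + Real.sin α • νp)
    (hνdec : ν = Real.cos α • Θ + Real.sin α • Θp)
    (ψ : SchwartzMap (EuclideanSpace ℝ (Fin n)) ℂ)
    (t : ℝ) (ξ : EuclideanSpace ℝ (Fin n)) (hξ : ⟪ξ, Θ⟫ = 0) :
    (Real.sqrt (2 * Real.pi))⁻¹ *
        ∫ τ : ℝ, Complex.exp (Complex.I * t * τ) *
          ψ ((τ • Θ + ξ) - ⟪τ • Θ + ξ, ν⟫ • ν) =
      ((Real.sin α)⁻¹ : ℂ) *
        Complex.exp (Complex.I * (⟪ξ, Θp⟫ : ℝ) * t * (Real.cos α / Real.sin α)) *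
        ((Real.sqrt (2 * Real.pi))⁻¹ *
          ∫ σ : ℝ, Complex.exp (Complex.I * (t / Real.sin α) * σ) *
            ψ (σ • νp + (ξ - (⟪ξ, Θp⟫ : ℝ) • Θp))) := by
  set s := Real.sin α with hs
  set c := Real.cos α with hc
  have hspos : 0 < s := Real.sin_pos_of_pos_of_lt_pi hα.1 hα.2
  have hsne : s ≠ 0 := hspos.ne'
  set L : ℝ := ⟪ξ, Θp⟫ with hL
  -- decomposition of Θp
  have hΘp_eq : Θp = s • ν - c • νp := by
    have h1 : s • Θp = s • (s • ν - c • νp) := by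
      have : s • Θp = ν - c • Θ := by rw [hνdec]; module
      rw [this, hΘdec]
      have := Real.sin_sq_add_cos_sq α
      rw [smul_sub, smul_smul, smul_smul]
      rw [show ν - c • (c • ν + s • νp) = (1 - c * c) • ν - (c * s) • νp by module]
      have h2 : 1 - c * c = s * s := by nlinarith [Real.sin_sq_add_cos_sq α]
      rw [h2]; module
    exact smul_right_injective _ hsne h1
  -- inner products
  have hξν : ⟪ξ, ν⟫ = s * L := by
    rw [hνdec, inner_add_right, real_inner_smul_right, real_inner_smul_right, hξ, hL]
    ring
  have hΘν : ⟪Θ, ν⟫ = c := hcos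
  -- substitution function
  set F : ℝ → ℂ := fun σ => Complex.exp (Complex.I * (t / s) * σ) *
      ψ (σ • νp + (ξ - L • Θp)) with hF
  have hsub : (∫ σ : ℝ, F σ) = (s : ℂ) * ∫ τ : ℝ, F (s * τ - L * c) := by
    have h1 : (∫ τ : ℝ, (fun x => F (x - L * c)) (s * τ)) =
        |s⁻¹| • ∫ x : ℝ, F (x - L * c) :=
      MeasureTheory.Measure.integral_comp_mul_left (fun x => F (x - L * c)) s
    have h2 : (∫ x : ℝ, F (x - L * c)) = ∫ x : ℝ, F x :=
      integral_sub_right_eq_self F (L * c)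
    have h3 : (∫ τ : ℝ, F (s * τ - L * c)) = |s⁻¹| • ∫ x : ℝ, F x := by
      rw [← h2, ← h1]
    rw [h3, abs_of_pos (inv_pos.2 hspos), Complex.real_smul]
    push_cast
    rw [← mul_assoc, mul_inv_cancel₀ (by exact_mod_cast hsne), one_mul]
  -- pointwise identity
  have hpt : ∀ τ : ℝ,
      Complex.exp (Complex.I * L * t * (c / s)) * F (s * τ - L * c) =
      Complex.exp (Complex.I * t * τ) * ψ ((τ • Θ + ξ) - ⟪τ • Θ + ξ, ν⟫ • ν) := by
    intro τ
    have harg : ((s * τ - L * c) • νp + (ξ - L • Θp)) =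
        ((τ • Θ + ξ) - ⟪τ • Θ + ξ, ν⟫ • ν) := by
      have hin : ⟪τ • Θ + ξ, ν⟫ = τ * c + s * L := by
        rw [inner_add_left, real_inner_smul_left, hΘν, hξν]
      rw [hin, hΘp_eq, hΘdec]
      module
    simp only [hF]
    rw [harg]
    have hexp : Complex.exp (Complex.I * L * t * (c / s)) *
        Complex.exp (Complex.I * (t / s) * (s * τ - L * c)) =
        Complex.exp (Complex.I * t * τ) := by
      rw [← Complex.exp_add]
      congr 1
      have hsC : (s : ℂ) ≠ 0 := by exact_mod_cast hsne
      field_simp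
      ring
    push_cast
    rw [← mul_assoc, hexp]
  -- conclude
  rw [hsub]
  have hint : ((Real.sin α)⁻¹ : ℂ) *
      Complex.exp (Complex.I * (L : ℝ) * t * (c / s)) *
      ((Real.sqrt (2 * Real.pi))⁻¹ * ((s : ℂ) * ∫ τ : ℝ, F (s * τ - L * c))) =
      (Real.sqrt (2 * Real.pi))⁻¹ *
      ∫ τ : ℝ, Complex.exp (Complex.I * L * t * (c / s)) * F (s * τ - L * c) := by
    rw [MeasureTheory.integral_const_mul]
    have hsC : (s : ℂ) ≠ 0 := by exact_mod_cast hsne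
    have key : ∀ (a E r I : ℂ), a ≠ 0 → a⁻¹ * E * (r * (a * I)) = r * (E * I) := by
      intro a E r I ha
      field_simp
    rw [Complex.ofReal_inv]
    exact key _ _ _ _ hsC
  rw [hint]
  congr 1
  exact (integral_congr_ae (Filter.Eventually.of_forall fun τ => (hpt τ))).symm
end

section
/- There is no constant C > 0 such that for every bounded open D_s ⊂ ℝ³, every f ∈ L²(D_s), and the Newtonian potential solution u(x) = (1/(4π))∫ f(y)/|x−y| dy of Δu = −f, the estimate ‖u‖_{L²(D_r)} ≤ C√(d_r d_s)‖f‖_{L²(D_s)} holds for all bounded D_r. Concretely: taking f = characteristic function of the ball B_A(0) and D_r = B_R(c) with |c| = 2R and R ≫ A, one has u(x) ≥ (1/(4π))·(4πA³/3)/(3R) on B_R(c), so ‖u‖_{L²(B_R(c))} ≥ c₀ A³ R^{1/2}, while C√(d_r d_s)‖f‖_{L²} = C' A^{5/2} R^{1/2}, and A³ > C'' A^{5/2} for A large. -/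
open MeasureTheory

private lemma vol_ball3 (x : EuclideanSpace ℝ (Fin 3)) {r : ℝ} (hr : 0 ≤ r) :
    (volume (Metric.ball x r)).toReal = Real.pi / 3 * 4 * r ^ 3 := by
  rw [EuclideanSpace.volume_ball]
  have hcard : Fintype.card (Fin 3) = 3 := by simp
  rw [hcard, show (((3:ℕ):ℝ)) = 3 from by norm_num]
  have hG : Real.Gamma ((3 : ℝ) / 2 + 1) = 3 / 4 * Real.sqrt Real.pi := by
    rw [Real.Gamma_add_one (by norm_num)]
    have : (3 : ℝ) / 2 = 1 / 2 + 1 := by norm_num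
    rw [this, Real.Gamma_add_one (by norm_num), Real.Gamma_one_half_eq]
    ring
  have hπ : (0 : ℝ) < Real.pi := Real.pi_pos
  have hs : Real.sqrt Real.pi > 0 := Real.sqrt_pos.mpr hπ
  have hval : Real.sqrt Real.pi ^ 3 / Real.Gamma ((3 : ℝ) / 2 + 1) = Real.pi / 3 * 4 := by
    rw [hG]
    have h2 : Real.sqrt Real.pi ^ 3 = Real.pi * Real.sqrt Real.pi := by
      have := Real.sq_sqrt hπ.le
      nlinarith [this]
    rw [h2]
    field_simp
  rw [hval, ENNReal.toReal_mul, ENNReal.toReal_pow, ENNReal.toReal_ofReal hr,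
    ENNReal.toReal_ofReal (by positivity)]
  ring

set_option maxHeartbeats 1000000 in
/-- No constant C > 0 makes the diameter estimate
‖u‖_{L²(D_r)} ≤ C √(d_r d_s) ‖f‖_{L²(D_s)} hold for the Newtonian potential
u(x) = (1/(4π)) ∫ f(y)/|x−y| dy in ℝ³. -/
theorem stmt_19 :
    ¬ ∃ C : ℝ, 0 < C ∧
      ∀ Ds : Set (EuclideanSpace ℝ (Fin 3)), IsOpen Ds → Bornology.IsBounded Ds →
        ∀ f : EuclideanSpace ℝ (Fin 3) → ℝ, Function.support f ⊆ Ds →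
          MemLp f 2 volume →
          ∀ Dr : Set (EuclideanSpace ℝ (Fin 3)), Bornology.IsBounded Dr →
            Real.sqrt (∫ x in Dr,
                ((1 / (4 * Real.pi)) * ∫ y, f y / ‖x - y‖) ^ 2) ≤
              C * Real.sqrt (Metric.diam Dr * Metric.diam Ds) *
                Real.sqrt (∫ x in Ds, f x ^ 2) := by
  rintro ⟨C, hC, h⟩
  have hπ : (0 : ℝ) < Real.pi := Real.pi_pos
  set A : ℝ := 49 * C + 1 with hAdef
  have hA0 : (0 : ℝ) < A := by positivity
  set c : EuclideanSpace ℝ (Fin 3) := EuclideanSpace.single 0 (2 * A) with hcdef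
  have hc : ‖c‖ = 2 * A := by
    rw [hcdef, EuclideanSpace.norm_single, Real.norm_eq_abs, abs_of_nonneg (by linarith)]
  set f : EuclideanSpace ℝ (Fin 3) → ℝ := (Metric.ball (0 : EuclideanSpace ℝ (Fin 3)) A).indicator
    (fun _ => (1 : ℝ)) with hfdef
  -- the potential
  set u : EuclideanSpace ℝ (Fin 3) → ℝ :=
    fun x => (1 / (4 * Real.pi)) * ∫ y, f y / ‖x - y‖ with hudef
  set V : ℝ := (volume (Metric.ball (0 : EuclideanSpace ℝ (Fin 3)) A)).toReal with hVdef
  set W : ℝ := (volume (Metric.ball c (A / 2))).toReal with hWdef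
  have hVval : V = Real.pi / 3 * 4 * A ^ 3 := vol_ball3 _ hA0.le
  have hWval : W = Real.pi / 3 * 4 * (A / 2) ^ 3 := vol_ball3 _ (by linarith)
  have hVpos : 0 < V := by rw [hVval]; positivity
  have hWpos : 0 < W := by rw [hWval]; positivity
  -- bounds on ‖x - y‖
  have hdist : ∀ x ∈ Metric.ball c (A / 2), ∀ y ∈ Metric.ball (0 : EuclideanSpace ℝ (Fin 3)) A,
      A / 2 ≤ ‖x - y‖ ∧ ‖x - y‖ ≤ 4 * A := by
    intro x hx y hy
    rw [Metric.mem_ball, dist_eq_norm] at hx hy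
    rw [sub_zero] at hy
    have t1 : ‖c - y‖ ≤ ‖c - x‖ + ‖x - y‖ := norm_sub_le_norm_sub_add_norm_sub c x y
    have t2 : ‖c‖ - ‖y‖ ≤ ‖c - y‖ := norm_sub_norm_le c y
    have t3 : ‖c - x‖ = ‖x - c‖ := norm_sub_rev c x
    have t4 : ‖x - y‖ ≤ ‖x - c‖ + ‖c - y‖ := norm_sub_le_norm_sub_add_norm_sub x c y
    have t5 : ‖c - y‖ ≤ ‖c‖ + ‖y‖ := norm_sub_le c y
    constructor <;> [linarith [hx, hy, hc ▸ t2]; linarith [hc ▸ t5]]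
  -- rewrite the integrand
  have hint : ∀ x : EuclideanSpace ℝ (Fin 3),
      (∫ y, f y / ‖x - y‖) =
        ∫ y in Metric.ball (0 : EuclideanSpace ℝ (Fin 3)) A, ‖x - y‖⁻¹ := by
    intro x
    rw [← integral_indicator Metric.isOpen_ball.measurableSet]
    congr 1
    funext y
    by_cases hy : y ∈ Metric.ball (0 : EuclideanSpace ℝ (Fin 3)) A
    · simp [hfdef, Set.indicator_of_mem hy, one_div]
    · simp [hfdef, Set.indicator_of_notMem hy]
  -- integrability of the kernel on the source ball, for x in target ball
  have hker_int : ∀ x ∈ Metric.ball c (A / 2),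
      IntegrableOn (fun y => ‖x - y‖⁻¹) (Metric.ball (0 : EuclideanSpace ℝ (Fin 3)) A) volume := by
    intro x hx
    apply Measure.integrableOn_of_bounded (M := (A / 2)⁻¹) measure_ball_lt_top.ne
    · exact (measurable_const.sub measurable_id).norm.inv.aestronglyMeasurable
    · filter_upwards [ae_restrict_mem Metric.isOpen_ball.measurableSet] with y hy
      obtain ⟨h1, _⟩ := hdist x hx y hy
      rw [Real.norm_eq_abs, abs_of_nonneg (by positivity)]
      exact inv_anti₀ (by linarith) h1
  -- lower bound for u on the target ball
  have hu_lower : ∀ x ∈ Metric.ball c (A / 2),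
      (1 / (4 * Real.pi)) * ((4 * A)⁻¹ * V) ≤ u x := by
    intro x hx
    show (1 / (4 * Real.pi)) * ((4 * A)⁻¹ * V) ≤ (1 / (4 * Real.pi)) * ∫ y, f y / ‖x - y‖
    have hI : (4 * A)⁻¹ * V ≤ ∫ y in Metric.ball (0 : EuclideanSpace ℝ (Fin 3)) A, ‖x - y‖⁻¹ := by
      apply setIntegral_ge_of_const_le_real Metric.isOpen_ball.measurableSet measure_ball_lt_top.ne
      · intro y hy
        obtain ⟨h1, h2⟩ := hdist x hx y hy
        exact inv_anti₀ (by linarith) h2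
      · exact hker_int x hx
    rw [hint x]
    exact mul_le_mul_of_nonneg_left hI (by positivity)
  -- upper bound for |u| on the target ball
  have hu_upper : ∀ x ∈ Metric.ball c (A / 2),
      ‖u x‖ ≤ (1 / (4 * Real.pi)) * ((A / 2)⁻¹ * V) := by
    intro x hx
    show ‖(1 / (4 * Real.pi)) * ∫ y, f y / ‖x - y‖‖ ≤ _
    simp only [norm_mul, Real.norm_eq_abs]
    rw [abs_of_nonneg (by positivity : (0:ℝ) ≤ 1 / (4 * Real.pi))]
    apply mul_le_mul_of_nonneg_left _ (by positivity)
    rw [hint x, ← Real.norm_eq_abs]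
    apply norm_setIntegral_le_of_norm_le_const measure_ball_lt_top
    · intro y hy
      obtain ⟨h1, _⟩ := hdist x hx y hy
      rw [Real.norm_eq_abs, abs_of_nonneg (by positivity)]
      exact inv_anti₀ (by linarith) h1
  -- measurability of u
  have hu_meas : Measurable u := by
    have hg : StronglyMeasurable
        (fun p : EuclideanSpace ℝ (Fin 3) × EuclideanSpace ℝ (Fin 3) => f p.2 / ‖p.1 - p.2‖) := by
      apply Measurable.stronglyMeasurable
      have hfm : Measurable f := by
        apply Measurable.indicator measurable_const Metric.isOpen_ball.measurableSet
      exact (hfm.comp measurable_snd).div ((measurable_fst.sub measurable_snd).norm)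
    exact measurable_const.mul hg.integral_prod_right'.measurable
  -- lower bound for the L² integral on the target ball
  set m : ℝ := (1 / (4 * Real.pi)) * ((4 * A)⁻¹ * V) with hmdef
  have hm0 : 0 < m := by rw [hmdef]; positivity
  have hL2 : m ^ 2 * W ≤ ∫ x in Metric.ball c (A / 2), u x ^ 2 := by
    apply setIntegral_ge_of_const_le_real Metric.isOpen_ball.measurableSet measure_ball_lt_top.ne
    · intro x hx
      exact pow_le_pow_left₀ hm0.le (hu_lower x hx) 2
    · apply Measure.integrableOn_of_bounded
        (M := ((1 / (4 * Real.pi)) * ((A / 2)⁻¹ * V)) ^ 2) measure_ball_lt_top.ne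
      case f_mble => exact (hu_meas.pow_const 2).aestronglyMeasurable
      case f_bdd =>
        filter_upwards [ae_restrict_mem Metric.isOpen_ball.measurableSet] with x hx
        rw [Real.norm_eq_abs, abs_pow, ← Real.norm_eq_abs]
        exact pow_le_pow_left₀ (norm_nonneg _) (hu_upper x hx) 2
  -- the integral of f² on the source ball equals V
  have hf2 : (∫ x in Metric.ball (0 : EuclideanSpace ℝ (Fin 3)) A, f x ^ 2) = V := by
    have : ∀ x ∈ Metric.ball (0 : EuclideanSpace ℝ (Fin 3)) A, f x ^ 2 = 1 := by
      intro x hx; simp [hfdef, Set.indicator_of_mem hx]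
    rw [setIntegral_congr_fun Metric.isOpen_ball.measurableSet (fun x hx => this x hx), setIntegral_const, smul_eq_mul,
      mul_one, hVdef, Measure.real]
  -- apply the hypothesis
  have key := h (Metric.ball 0 A) Metric.isOpen_ball Metric.isBounded_ball f
    Set.support_indicator_subset
    (memLp_indicator_const 2 Metric.isOpen_ball.measurableSet 1 (Or.inr measure_ball_lt_top.ne))
    (Metric.ball c (A / 2)) Metric.isBounded_ball
  rw [hf2] at key
  -- lower bound on LHS of key
  have hLHS : Real.sqrt (m ^ 2 * W) ≤
      Real.sqrt (∫ x in Metric.ball c (A / 2), u x ^ 2) := Real.sqrt_le_sqrt hL2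
  -- upper bound on RHS of key
  have hdiam1 : Metric.diam (Metric.ball c (A / 2)) ≤ A := by
    have := Metric.diam_ball (x := c) (by linarith : (0:ℝ) ≤ A / 2)
    linarith
  have hdiam2 : Metric.diam (Metric.ball (0 : EuclideanSpace ℝ (Fin 3)) A) ≤ 2 * A := by
    exact Metric.diam_ball hA0.le
  have hRHS : C * Real.sqrt (Metric.diam (Metric.ball c (A / 2)) *
        Metric.diam (Metric.ball (0 : EuclideanSpace ℝ (Fin 3)) A)) * Real.sqrt V ≤
      C * Real.sqrt (A * (2 * A)) * Real.sqrt V := by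
    apply mul_le_mul_of_nonneg_right _ (Real.sqrt_nonneg V)
    apply mul_le_mul_of_nonneg_left _ hC.le
    apply Real.sqrt_le_sqrt
    exact mul_le_mul hdiam1 hdiam2 Metric.diam_nonneg (by linarith)
  -- final numeric contradiction
  have hfin : C * Real.sqrt (A * (2 * A)) * Real.sqrt V < Real.sqrt (m ^ 2 * W) := by
    have hnn : 0 ≤ C * Real.sqrt (A * (2 * A)) * Real.sqrt V := by positivity
    rw [Real.lt_sqrt hnn]
    have e1 : (C * Real.sqrt (A * (2 * A)) * Real.sqrt V) ^ 2
        = C ^ 2 * (A * (2 * A)) * V := by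
      rw [mul_pow, mul_pow, Real.sq_sqrt (by positivity), Real.sq_sqrt hVpos.le]
    rw [e1]
    have hm : m = A ^ 2 / 12 := by
      rw [hmdef, hVval]; field_simp; ring
    rw [hm, hWval, hVval]
    have key2 : 2304 * C ^ 2 * A ^ 5 < A ^ 7 := by
      have h2304 : 2304 * C ^ 2 < A ^ 2 := by rw [hAdef]; nlinarith
      have hA5 : (0:ℝ) < A ^ 5 := pow_pos hA0 5
      calc 2304 * C ^ 2 * A ^ 5 < A ^ 2 * A ^ 5 := by nlinarith
        _ = A ^ 7 := by ring
    have hmul := mul_lt_mul_of_pos_left key2 hπ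
    have e2 : C ^ 2 * (A * (2 * A)) * (Real.pi / 3 * 4 * A ^ 3)
        = Real.pi * (2304 * C ^ 2 * A ^ 5) / 864 := by ring
    have e3 : (A ^ 2 / 12) ^ 2 * (Real.pi / 3 * 4 * (A / 2) ^ 3)
        = Real.pi * A ^ 7 / 864 := by ring
    rw [e2, e3]
    gcongr ?_ / 864
  have key' : Real.sqrt (∫ x in Metric.ball c (A / 2), u x ^ 2) ≤
      C * Real.sqrt (Metric.diam (Metric.ball c (A / 2)) *
        Metric.diam (Metric.ball (0 : EuclideanSpace ℝ (Fin 3)) A)) * Real.sqrt V := key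
  exact absurd (hLHS.trans (key'.trans hRHS)) (not_le.mpr hfin)
end
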